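/- Define φ(k) = 1/(2^{1/k} − 1) − k + 1 for real k > 0. Then φ is strictly convex on (0, ∞), i.e., its second derivative is positive for all k > 0. -/

import Mathlib

open Real Set

private lemma key_aux : ∀ x : ℝ, 0 < x → 0 < x * Real.exp x - Real.exp x + 1 := by
  set g : ℝ → ℝ := fun x => x * Real.exp x - Real.exp x + 1 with hg
  have hd : ∀ x : ℝ, HasDerivAt g (x * Real.exp x) x := by
    intro x
    have h := (((hasDerivAt_id x).mul (Real.hasDerivAt_exp x)).sub
      (Real.hasDerivAt_exp x)).add_const 1
    refine h.congr_deriv ?_; simp only [id_eq]; ring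
  have hmono : StrictMonoOn g (Set.Ici 0) := by
    apply strictMonoOn_of_deriv_pos (convex_Ici 0)
    · exact fun x _ => (hd x).continuousAt.continuousWithinAt
    · intro x hx
      rw [interior_Ici] at hx
      rw [(hd x).deriv]
      exact mul_pos hx (Real.exp_pos x)
  intro x hx
  have := hmono (Set.self_mem_Ici) (Set.mem_Ici.2 hx.le) hx
  simpa [hg] using this

private lemma key : ∀ x : ℝ, 0 < x →
    0 < x * (Real.exp x + 1) - 2 * (Real.exp x - 1) := by
  set h : ℝ → ℝ := fun x => x * (Real.exp x + 1) - 2 * (Real.exp x - 1) with hh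
  have hd : ∀ x : ℝ, HasDerivAt h (x * Real.exp x - Real.exp x + 1) x := by
    intro x
    have h1 := ((hasDerivAt_id x).mul ((Real.hasDerivAt_exp x).add_const 1)).sub
      (((Real.hasDerivAt_exp x).sub_const 1).const_mul 2)
    refine h1.congr_deriv ?_; simp only [id_eq]; ring
  have hmono : StrictMonoOn h (Set.Ici 0) := by
    apply strictMonoOn_of_deriv_pos (convex_Ici 0)
    · exact fun x _ => (hd x).continuousAt.continuousWithinAt
    · intro x hx
      rw [interior_Ici] at hx
      rw [(hd x).deriv]
      exact key_aux x hx
  intro x hx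
  have := hmono (Set.self_mem_Ici) (Set.mem_Ici.2 hx.le) hx
  simpa [hh] using this

theorem phi_strictly_convex :
    let φ : ℝ → ℝ := fun k => 1 / ((2 : ℝ) ^ (1 / k) - 1) - k + 1
    StrictConvexOn ℝ (Set.Ioi (0 : ℝ)) φ ∧
    ∀ k : ℝ, 0 < k → 0 < deriv (deriv φ) k := by
  intro φ
  set c : ℝ := Real.log 2 with hc
  have hc0 : 0 < c := Real.log_pos (by norm_num)
  -- rewrite φ using exp
  have hφ : φ = fun k => (Real.exp (c * k⁻¹) - 1)⁻¹ - k + 1 := by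
    funext k
    simp only [φ, one_div, Real.rpow_def_of_pos (by norm_num : (0:ℝ) < 2), hc]
  set E : ℝ → ℝ := fun k => Real.exp (c * k⁻¹) with hE
  have hE1 : ∀ k : ℝ, 0 < k → 1 < E k := by
    intro k hk
    have := Real.exp_lt_exp.2 (mul_pos hc0 (inv_pos.2 hk) : (0:ℝ) < c * k⁻¹)
    rwa [Real.exp_zero] at this
  -- first derivative
  set F : ℝ → ℝ := fun k => c * E k / (k ^ 2 * (E k - 1) ^ 2) - 1 with hF
  have hEder : ∀ k : ℝ, (k ≠ 0) → HasDerivAt E (E k * (c * -(k ^ 2)⁻¹)) k := by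
    intro k hk
    exact (Real.hasDerivAt_exp _).comp k ((hasDerivAt_inv hk).const_mul c)
  have hder1 : ∀ k : ℝ, 0 < k → HasDerivAt φ (F k) k := by
    intro k hk
    have hk0 : k ≠ 0 := hk.ne'
    have hne : E k - 1 ≠ 0 := sub_ne_zero.2 (hE1 k hk).ne'
    have h1 := (((hEder k hk0).sub_const 1).inv hne).sub (hasDerivAt_id k)
    have h2 := h1.add_const 1
    rw [hφ]
    refine h2.congr_deriv ?_
    simp only [F]
    field_simp
  -- second derivative
  set F2 : ℝ → ℝ := fun k =>
    ((-c ^ 2 * E k / k ^ 2) * (k ^ 2 * (E k - 1) ^ 2) -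
      c * E k * (2 * k * (E k - 1) ^ 2 - 2 * c * (E k - 1) * E k)) /
      (k ^ 2 * (E k - 1) ^ 2) ^ 2 with hF2
  have hder2 : ∀ k : ℝ, 0 < k → HasDerivAt F (F2 k) k := by
    intro k hk
    have hk0 : k ≠ 0 := hk.ne'
    have hne : E k - 1 ≠ 0 := sub_ne_zero.2 (hE1 k hk).ne'
    have hM : k ^ 2 * (E k - 1) ^ 2 ≠ 0 := by positivity
    have hNum : HasDerivAt (fun k => c * E k) (-c ^ 2 * E k / k ^ 2) k := by
      have := (hEder k hk0).const_mul c
      refine this.congr_deriv ?_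
      ring
    have hDen : HasDerivAt (fun k => k ^ 2 * (E k - 1) ^ 2)
        (2 * k * (E k - 1) ^ 2 - 2 * c * (E k - 1) * E k) k := by
      have h1 : HasDerivAt (fun k : ℝ => k ^ 2) (2 * k) k := by
        simpa using hasDerivAt_pow 2 k
      have h2 : HasDerivAt (fun k => (E k - 1) ^ 2)
          (2 * (E k - 1) * (E k * (c * -(k ^ 2)⁻¹))) k := by
        exact (((hEder k hk0).sub_const 1).pow 2).congr_deriv (by norm_num)
      have := h1.mul h2
      refine this.congr_deriv ?_
      field_simp; ring
    have := (hNum.div hDen hM).sub_const 1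
    exact this
  -- deriv φ = F on Ioi 0, so deriv (deriv φ) k = F2 k on Ioi 0
  have hdφ : ∀ k : ℝ, 0 < k → deriv (deriv φ) k = F2 k := by
    intro k hk
    have heq : deriv φ =ᶠ[nhds k] F := by
      filter_upwards [isOpen_Ioi.mem_nhds (Set.mem_Ioi.2 hk)] with y hy
      exact (hder1 y hy).deriv
    rw [heq.deriv_eq]
    exact (hder2 k hk).deriv
  -- positivity of F2
  have hF2pos : ∀ k : ℝ, 0 < k → 0 < F2 k := by
    intro k hk
    have hE1k := hE1 k hk
    have hD : 0 < E k - 1 := sub_pos.2 hE1k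
    have hEpos : 0 < E k := lt_trans one_pos hE1k
    have hkey := key (c / k) (div_pos hc0 hk)
    have hx : Real.exp (c / k) = E k := by rw [hE]; rw [div_eq_mul_inv]
    rw [hx] at hkey
    rw [hF2]
    apply div_pos
    · have hfact : (-c ^ 2 * E k / k ^ 2) * (k ^ 2 * (E k - 1) ^ 2) -
          c * E k * (2 * k * (E k - 1) ^ 2 - 2 * c * (E k - 1) * E k)
          = c * E k * (E k - 1) * (k * (c / k * (E k + 1) - 2 * (E k - 1))) := by
        field_simp
        ring
      rw [hfact]
      positivity
    · positivity
  constructor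
  · apply strictConvexOn_of_deriv2_pos (convex_Ioi 0)
    · exact fun k hk => (hder1 k hk).continuousAt.continuousWithinAt
    · intro k hk
      rw [interior_Ioi] at hk
      simp only [Function.iterate_succ, Function.iterate_zero, Function.comp_apply, id_eq,
        Function.comp]
      rw [hdφ k hk]
      exact hF2pos k hk
  · intro k hk
    rw [hdφ k hk]
    exact hF2pos k hk
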